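/- Fix α ∈ [1/2, 1). For every β with α/2 ≤ β ≤ 1 − α/2, one has f_A(α,β) − h(β) ≤ f_A(α,1/2) − 1; that is, the function β ↦ f_A(α,β) − h(β) on [α/2, 1−α/2] attains its maximum at β = 1/2 (where h(1/2) = 1). -/

import Mathlib

/-- Binary entropy function (base-2 logs), with the convention `0 * log 0 = 0`. -/
noncomputable def binEnt (x : ℝ) : ℝ :=
  -(x * Real.logb 2 x) - (1 - x) * Real.logb 2 (1 - x)

/-- The spectral shape exponent of the accumulator:
`f_A(α,β) = α − h(β) + (1−α)·h((β−α/2)/(1−α))`. -/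
noncomputable def fA (α β : ℝ) : ℝ :=
  α - binEnt β + (1 - α) * binEnt ((β - α / 2) / (1 - α))

/-- The spectral shape exponent of the discrete derivative:
`f_D(α,β) = (1−α)·h(β/(2(1−α))) + α·h(β/(2α)) − h(α)`. -/
noncomputable def fD (α β : ℝ) : ℝ :=
  (1 - α) * binEnt (β / (2 * (1 - α))) + α * binEnt (β / (2 * α)) - binEnt α

lemma binEnt_eq (x : ℝ) : binEnt x = Real.binEntropy x / Real.log 2 := by
  simp only [binEnt, Real.binEntropy, Real.logb, Real.log_inv]
  ring

set_option maxHeartbeats 1000000 in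
/-- Key inequality in natural-log units. -/
lemma key_ineq (α : ℝ) (hα0 : 1 / 2 ≤ α) (hα1 : α < 1)
    (β : ℝ) (hβl : α / 2 ≤ β) (hβu : β ≤ 1 - α / 2) :
    (1 + α) * Real.log 2 + (1 - α) * Real.binEntropy ((β - α / 2) / (1 - α))
      ≤ 2 * Real.binEntropy β := by
  have hα1' : (0:ℝ) < 1 - α := by linarith
  set g : ℝ → ℝ := fun x => 2 * Real.binEntropy x
      - (1 - α) * Real.binEntropy ((x - α / 2) / (1 - α)) with hg
  -- derivative of g on the open interval
  have hderiv : ∀ x ∈ Set.Ioo (α / 2) (1 - α / 2),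
      HasDerivAt g (2 * (Real.log (1 - x) - Real.log x)
        - (Real.log (1 - (x - α / 2) / (1 - α)) - Real.log ((x - α / 2) / (1 - α)))) x := by
    intro x hx
    obtain ⟨hx1, hx2⟩ := hx
    have hx0 : 0 < x := by linarith
    have hx1' : x < 1 := by linarith
    set t : ℝ := (x - α / 2) / (1 - α) with htdef
    have ht0 : 0 < t := div_pos (by linarith) hα1'
    have ht1 : t < 1 := by
      rw [htdef, div_lt_one hα1']; linarith
    have h1 : HasDerivAt Real.binEntropy (Real.log (1 - x) - Real.log x) x :=
      Real.hasDerivAt_binEntropy hx0.ne' hx1'.ne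
    have h2 : HasDerivAt (fun y : ℝ => (y - α / 2) / (1 - α)) (1 / (1 - α)) x := by
      simpa using ((hasDerivAt_id x).sub_const (α / 2)).div_const (1 - α)
    have h3 : HasDerivAt (fun y : ℝ => Real.binEntropy ((y - α / 2) / (1 - α)))
        ((Real.log (1 - t) - Real.log t) * (1 / (1 - α))) x :=
      by have h3' := (Real.hasDerivAt_binEntropy ht0.ne' ht1.ne).comp x h2; exact h3'
    have h4 := (h1.const_mul 2).sub (h3.const_mul (1 - α))
    refine h4.congr_deriv ?_
    rw [mul_comm (Real.log (1 - t) - Real.log t), ← mul_assoc, mul_one_div_cancel hα1'.ne', one_mul]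
  have hcont : Continuous g := by
    have h1 : Continuous fun y : ℝ => (y - α / 2) / (1 - α) := by fun_prop
    exact (continuous_const.mul Real.binEntropy_continuous).sub
      (continuous_const.mul (Real.binEntropy_continuous.comp h1))
  have h5 : ((1:ℝ)/2 - α/2)/(1-α) = 1/2 := by
    field_simp
  have h6 : Real.binEntropy (1/2) = Real.log 2 := by
    rw [show (1:ℝ)/2 = 2⁻¹ by norm_num]; exact Real.binEntropy_two_inv
  have hg_half : g (1/2) = (1 + α) * Real.log 2 := by
    show 2 * Real.binEntropy (1/2)
      - (1 - α) * Real.binEntropy (((1:ℝ)/2 - α / 2) / (1 - α)) = (1 + α) * Real.log 2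
    rw [h5, h6]; ring
  -- antitone on left half
  have hanti : AntitoneOn g (Set.Icc (α/2) (1/2)) := by
    apply antitoneOn_of_deriv_nonpos (convex_Icc _ _) hcont.continuousOn
    · intro x hx
      rw [interior_Icc] at hx
      have hx' : x ∈ Set.Ioo (α/2) (1 - α/2) := ⟨hx.1, by linarith [hx.2]⟩
      exact (hderiv x hx').differentiableAt.differentiableWithinAt
    · intro x hx
      rw [interior_Icc] at hx
      obtain ⟨hxl, hxr⟩ := hx
      have hx' : x ∈ Set.Ioo (α/2) (1 - α/2) := ⟨hxl, by linarith⟩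
      rw [(hderiv x hx').deriv]
      have hx0 : 0 < x := by linarith
      have hx1' : x < 1 := by linarith
      set t : ℝ := (x - α / 2) / (1 - α) with htdef
      have ht0 : 0 < t := div_pos (by linarith) hα1'
      have ht1 : t < 1 := by rw [htdef, div_lt_one hα1']; linarith
      have hxα : (0:ℝ) < x - α/2 := by linarith
      have hlog : 2 * (Real.log (1 - x) - Real.log x) ≤ Real.log (1 - t) - Real.log t := by
        rw [← Real.log_div (by linarith) hx0.ne', ← Real.log_div (by linarith) ht0.ne']
        have hp : 2 * Real.log ((1-x)/x) = Real.log (((1-x)/x)^2) := by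
          rw [Real.log_pow]; push_cast; ring
        rw [hp]
        apply Real.log_le_log (pow_pos (div_pos (by linarith) hx0) 2)
        have h1t : (1 - t)/t = (1 - α/2 - x)/(x - α/2) := by
          rw [htdef]; field_simp; ring
        rw [h1t, div_pow, div_le_div_iff₀ (pow_pos hx0 2) hxα]
        nlinarith [mul_nonneg (show (0:ℝ) ≤ 1/2 - x by linarith)
          (show (0:ℝ) ≤ 2*x^2 - 2*x + α by nlinarith [sq_nonneg (2*x-1)])]
      linarith
  -- monotone on right half
  have hmono : MonotoneOn g (Set.Icc (1/2) (1 - α/2)) := by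
    apply monotoneOn_of_deriv_nonneg (convex_Icc _ _) hcont.continuousOn
    · intro x hx
      rw [interior_Icc] at hx
      have hx' : x ∈ Set.Ioo (α/2) (1 - α/2) := ⟨by linarith [hx.1], hx.2⟩
      exact (hderiv x hx').differentiableAt.differentiableWithinAt
    · intro x hx
      rw [interior_Icc] at hx
      obtain ⟨hxl, hxr⟩ := hx
      have hx' : x ∈ Set.Ioo (α/2) (1 - α/2) := ⟨by linarith, hxr⟩
      rw [(hderiv x hx').deriv]
      have hx0 : 0 < x := by linarith
      have hx1' : x < 1 := by linarith
      set t : ℝ := (x - α / 2) / (1 - α) with htdef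
      have ht0 : 0 < t := div_pos (by linarith) hα1'
      have ht1 : t < 1 := by rw [htdef, div_lt_one hα1']; linarith
      have hxα : (0:ℝ) < x - α/2 := by linarith
      have hlog : Real.log (1 - t) - Real.log t ≤ 2 * (Real.log (1 - x) - Real.log x) := by
        rw [← Real.log_div (by linarith) hx0.ne', ← Real.log_div (by linarith) ht0.ne']
        have hp : 2 * Real.log ((1-x)/x) = Real.log (((1-x)/x)^2) := by
          rw [Real.log_pow]; push_cast; ring
        rw [hp]
        apply Real.log_le_log (div_pos (by linarith) ht0)
        have h1t : (1 - t)/t = (1 - α/2 - x)/(x - α/2) := by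
          rw [htdef]; field_simp; ring
        rw [h1t, div_pow, div_le_div_iff₀ hxα (pow_pos hx0 2)]
        nlinarith [mul_nonneg (show (0:ℝ) ≤ x - 1/2 by linarith)
          (show (0:ℝ) ≤ 2*x^2 - 2*x + α by nlinarith [sq_nonneg (2*x-1)])]
      linarith
  -- conclude g (1/2) ≤ g β
  have hgβ : g (1/2) ≤ g β := by
    rcases le_or_gt β (1/2) with h | h
    · exact hanti ⟨hβl, h⟩ ⟨by linarith, le_refl _⟩ h
    · exact hmono ⟨le_refl _, by linarith⟩ ⟨h.le, hβu⟩ h.le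
  have hgβ' : (1 + α) * Real.log 2
      ≤ 2 * Real.binEntropy β - (1 - α) * Real.binEntropy ((β - α / 2) / (1 - α)) := by
    rw [← hg_half]; exact hgβ
  linarith

/-- For fixed `α ∈ [1/2, 1)`, the function `β ↦ f_A(α,β) − h(β)` on `[α/2, 1−α/2]`
attains its maximum at `β = 1/2` (where `h(1/2) = 1`). -/
theorem fA_sub_entropy_max_at_half (α : ℝ) (hα0 : 1 / 2 ≤ α) (hα1 : α < 1)
    (β : ℝ) (hβl : α / 2 ≤ β) (hβu : β ≤ 1 - α / 2) :
    fA α β - binEnt β ≤ fA α (1 / 2) - 1 := by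
  have hL : 0 < Real.log 2 := Real.log_pos (by norm_num)
  have hα1' : (0:ℝ) < 1 - α := by linarith
  have key := key_ineq α hα0 hα1 β hβl hβu
  have h5 : ((1:ℝ)/2 - α/2)/(1-α) = 1/2 := by field_simp
  have h6 : Real.binEntropy (1/2) = Real.log 2 := by
    rw [show (1:ℝ)/2 = 2⁻¹ by norm_num]; exact Real.binEntropy_two_inv
  have hbhalf : binEnt (1/2) = 1 := by
    rw [binEnt_eq, h6, div_self hL.ne']
  unfold fA
  rw [h5, hbhalf, binEnt_eq, binEnt_eq]
  have h7 : ((1 - α) * Real.binEntropy ((β - α / 2) / (1 - α))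
      - 2 * Real.binEntropy β) / Real.log 2 ≤ -(1 + α) := by
    rw [div_le_iff₀ hL]; linarith
  have hr : α - Real.binEntropy β / Real.log 2
      + (1 - α) * (Real.binEntropy ((β - α / 2) / (1 - α)) / Real.log 2)
      - Real.binEntropy β / Real.log 2
      = α + ((1 - α) * Real.binEntropy ((β - α / 2) / (1 - α))
          - 2 * Real.binEntropy β) / Real.log 2 := by
    ring
  linarith [h7, hr]
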